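/- Let k ≥ 2 be an integer and let σ be any permutation of {1, 2, …, k}. Then the set of positive integers n for which φ(n+σ(1)) > φ(n+σ(2)) > ⋯ > φ(n+σ(k)) has positive lower density. In particular, there exist infinitely many strings of k consecutive integers whose φ-values are arranged from largest to smallest in any prescribed manner. -/

import Mathlib

open Finset Filter

/-- Extraction: from a finite set of factors in (0,1] with small product,
extract a subset whose product lands in [c, 2c). -/
lemma extract_subset (c : ℝ) (hc : 0 < c) :
    ∀ (F : Finset ℕ), (∀ q ∈ F, 2 ≤ q) → ∀ u : ℝ, c ≤ u →
      u * ∏ q ∈ F, (1 - 1/(q:ℝ)) < c →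
      ∃ S ⊆ F, c ≤ u * ∏ q ∈ S, (1 - 1/(q:ℝ)) ∧ u * ∏ q ∈ S, (1 - 1/(q:ℝ)) < 2*c := by
  intro F
  induction F using Finset.induction with
  | empty => intro _ u hcu h; simp at h; linarith
  | @insert q F' hqF' ih =>
    intro hq2 u hcu h
    have hq2' : (2:ℕ) ≤ q := hq2 q (mem_insert_self _ _)
    have hq0 : (0:ℝ) < q := by positivity
    have hhalf : (1/2 : ℝ) ≤ 1 - 1/(q:ℝ) := by
      have : (1/(q:ℝ)) ≤ 1/2 := by
        apply div_le_div_of_nonneg_left <;> norm_num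
        exact_mod_cast hq2'
      linarith
    rw [Finset.prod_insert hqF'] at h
    by_cases hcase : c ≤ u * (1 - 1/(q:ℝ))
    · obtain ⟨S', hS'sub, h1, h2⟩ := ih (fun r hr => hq2 r (mem_insert_of_mem hr))
        (u * (1 - 1/(q:ℝ))) hcase (by rw [← mul_assoc] at h; exact h)
      refine ⟨insert q S', insert_subset_insert _ hS'sub, ?_, ?_⟩
      · rwa [Finset.prod_insert (fun hmem => hqF' (hS'sub hmem)), ← mul_assoc]
      · rwa [Finset.prod_insert (fun hmem => hqF' (hS'sub hmem)), ← mul_assoc]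
    · push_neg at hcase
      refine ⟨∅, empty_subset _, by simpa using hcu, ?_⟩
      simp only [Finset.prod_empty, mul_one]
      nlinarith

/-- From divergence of the sum of prime reciprocals: a finset of primes,
all exceeding `B`, with reciprocal sum at least `X`. -/
lemma exists_primes_sum_ge (B : ℕ) (X : ℝ) :
    ∃ F : Finset ℕ, (∀ q ∈ F, q.Prime ∧ B < q) ∧ X ≤ ∑ q ∈ F, (1/(q:ℝ)) := by
  classical
  set f : ℕ → ℝ := Set.indicator {p | p.Prime} (fun n : ℕ => (1 : ℝ) / n) with hf
  have hf0 : ∀ n, 0 ≤ f n := by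
    intro n
    by_cases h : n ∈ {p | Nat.Prime p} <;>
      simp [hf, Set.indicator_apply, h] <;> positivity
  have hdiv : Tendsto (fun n => ∑ i ∈ Finset.range n, f i) atTop atTop :=
    (not_summable_iff_tendsto_nat_atTop_of_nonneg hf0).mp not_summable_one_div_on_primes
  set D : ℝ := ∑ q ∈ (Finset.range (B+1)).filter Nat.Prime, (1/(q:ℝ)) with hD
  obtain ⟨N, hN⟩ := (tendsto_atTop.mp hdiv (X + D)).exists
  refine ⟨(Finset.range N).filter (fun q => q.Prime ∧ B < q), ?_, ?_⟩
  · intro q hq; exact (Finset.mem_filter.mp hq).2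
  · have hsum : ∑ i ∈ Finset.range N, f i = ∑ q ∈ (Finset.range N).filter Nat.Prime, (1/(q:ℝ)) := by
      rw [Finset.sum_filter]
      apply Finset.sum_congr rfl
      intro i _
      by_cases h : i.Prime <;> simp [hf, Set.indicator_apply, h]
    have hsplit : (Finset.range N).filter Nat.Prime ⊆
        ((Finset.range N).filter (fun q => q.Prime ∧ B < q)) ∪
        ((Finset.range (B+1)).filter Nat.Prime) := by
      intro q hq
      rw [Finset.mem_filter] at hq
      rcases le_or_gt q B with h | h
      · exact Finset.mem_union_right _ (Finset.mem_filter.mpr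
          ⟨Finset.mem_range.mpr (Nat.lt_succ_of_le h), hq.2⟩)
      · exact Finset.mem_union_left _ (Finset.mem_filter.mpr ⟨hq.1, hq.2, h⟩)
    have hle : ∑ q ∈ (Finset.range N).filter Nat.Prime, (1/(q:ℝ)) ≤
        (∑ q ∈ (Finset.range N).filter (fun q => q.Prime ∧ B < q), (1/(q:ℝ))) + D := by
      rw [hD]
      refine le_trans (Finset.sum_le_sum_of_subset_of_nonneg hsplit ?_) ?_
      · intro i _ _; positivity
      · have := Finset.sum_union_inter (s₁ := (Finset.range N).filter (fun q => q.Prime ∧ B < q))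
          (s₂ := (Finset.range (B+1)).filter Nat.Prime) (f := fun q => (1/(q:ℝ)))
        have hnn : (0:ℝ) ≤ ∑ q ∈ ((Finset.range N).filter (fun q => q.Prime ∧ B < q)) ∩
            ((Finset.range (B+1)).filter Nat.Prime), (1/(q:ℝ)) :=
          Finset.sum_nonneg (fun i _ => by positivity)
        linarith
    rw [hsum] at hN
    linarith

/-- Greedy selection: a finset of primes, all `> B`, whose `∏ (1-1/q)` brings `u` into `[c, 2c)`. -/
lemma greedy_primes (B : ℕ) (c u : ℝ) (hc : 0 < c) (hcu : c ≤ u) :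
    ∃ S : Finset ℕ, (∀ q ∈ S, q.Prime ∧ B < q) ∧
      c ≤ u * ∏ q ∈ S, (1 - 1/(q:ℝ)) ∧ u * ∏ q ∈ S, (1 - 1/(q:ℝ)) < 2*c := by
  obtain ⟨F, hF, hFsum⟩ := exists_primes_sum_ge B (Real.log (u/c) + 1)
  have hu0 : 0 < u := lt_of_lt_of_le hc hcu
  have hprod : u * ∏ q ∈ F, (1 - 1/(q:ℝ)) < c := by
    have h1 : ∀ q ∈ F, (1 - 1/(q:ℝ)) ≤ Real.exp (-(1/(q:ℝ))) := by
      intro q hq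
      have := Real.add_one_le_exp (-(1/(q:ℝ)))
      linarith
    have h0 : ∀ q ∈ F, (0:ℝ) ≤ 1 - 1/(q:ℝ) := by
      intro q hq
      have h2 : (2:ℕ) ≤ q := (hF q hq).1.two_le
      have : (1:ℝ) ≤ q := by exact_mod_cast Nat.one_le_of_lt h2
      have : 1/(q:ℝ) ≤ 1 := by rw [div_le_one] <;> linarith
      linarith
    calc u * ∏ q ∈ F, (1 - 1/(q:ℝ))
        ≤ u * ∏ q ∈ F, Real.exp (-(1/(q:ℝ))) := by
          apply mul_le_mul_of_nonneg_left _ hu0.le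
          exact Finset.prod_le_prod h0 h1
      _ = u * Real.exp (-∑ q ∈ F, (1/(q:ℝ))) := by
          rw [← Real.exp_sum]; simp
      _ ≤ u * Real.exp (-(Real.log (u/c) + 1)) := by
          apply mul_le_mul_of_nonneg_left _ hu0.le
          exact Real.exp_le_exp.mpr (by linarith)
      _ < c := by
          rw [neg_add, Real.exp_add, Real.exp_neg, Real.exp_log (by positivity)]
          rw [Real.exp_neg]
          have he : Real.exp 1 > 1 := by
            have := Real.exp_one_gt_d9; linarith
          have : (u/c)⁻¹ = c/u := by field_simp
          rw [this]
          calc u * (c/u * (Real.exp 1)⁻¹) = c * (Real.exp 1)⁻¹ := by field_simp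
            _ < c * 1 := by
                apply mul_lt_mul_of_pos_left _ hc
                rw [inv_lt_one_iff₀]; right; exact he
            _ = c := mul_one c
  obtain ⟨S, hSF, h1, h2⟩ := extract_subset c hc F (fun q hq => (hF q hq).1.two_le) u hcu hprod
  exact ⟨S, fun q hq => hF q (hSF hq), h1, h2⟩

/-- Select pairwise-disjoint finsets of primes, all `> k`, bringing each `u j`
into the window `[c j, 2 * c j)`. -/
lemma greedy_family (k : ℕ) (u c : ℕ → ℝ) (hc : ∀ j, 0 < c j) (hcu : ∀ j, c j ≤ u j) :
    ∀ t : ℕ, ∃ (S : ℕ → Finset ℕ) (B : ℕ),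
      (∀ j, ∀ q ∈ S j, q.Prime ∧ k < q ∧ q ≤ B) ∧
      (∀ i j, i ≠ j → Disjoint (S i) (S j)) ∧
      (∀ j < t, c j ≤ u j * ∏ q ∈ S j, (1 - 1/(q:ℝ)) ∧
        u j * ∏ q ∈ S j, (1 - 1/(q:ℝ)) < 2 * c j) := by
  intro t
  induction t with
  | zero => exact ⟨fun _ => ∅, 0, by simp, fun _ _ _ => by simp, by omega⟩
  | succ t ih =>
    obtain ⟨S, B, hSB, hdisj, hwin⟩ := ih
    obtain ⟨T, hT, hT1, hT2⟩ := greedy_primes (max B k) (c t) (u t) (hc t) (hcu t)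
    classical
    refine ⟨fun j => if j = t then T else S j, max B (T.sup id), ?_, ?_, ?_⟩
    · intro j q hq
      by_cases hj : j = t
      · simp only [hj, if_pos rfl] at hq
        exact ⟨(hT q hq).1, lt_of_le_of_lt (le_max_right B k) (hT q hq).2,
          le_max_of_le_right (Finset.le_sup (f := id) hq)⟩
      · simp only [if_neg hj] at hq
        exact ⟨(hSB j q hq).1, (hSB j q hq).2.1, le_max_of_le_left (hSB j q hq).2.2⟩
    · intro i j hij
      by_cases hi : i = t <;> by_cases hj : j = t
      · omega
      · simp only [hi, if_pos rfl, if_neg hj]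
        rw [Finset.disjoint_left]
        intro q hqT hqS
        have h1 := (hT q hqT).2
        have h2 := (hSB j q hqS).2.2
        omega
      · simp only [hj, if_pos rfl, if_neg hi]
        rw [Finset.disjoint_right]
        intro q hqT hqS
        have h1 := (hT q hqT).2
        have h2 := (hSB i q hqS).2.2
        omega
      · simp only [if_neg hi, if_neg hj]; exact hdisj i j hij
    · intro j hj
      by_cases hjt : j = t
      · subst hjt; simp only [if_pos rfl]; exact ⟨hT1, hT2⟩
      · simp only [if_neg hjt]; exact hwin j (by omega)

lemma totient_prod_primes : ∀ (s : Finset ℕ), (∀ q ∈ s, q.Prime) →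
    Nat.totient (∏ q ∈ s, q) = ∏ q ∈ s, (q-1) := by
  intro s
  induction s using Finset.induction with
  | empty => simp
  | @insert q s hqs ih =>
    intro hp
    have hq : q.Prime := hp q (mem_insert_self _ _)
    have hcop : Nat.Coprime q (∏ r ∈ s, r) := by
      refine Nat.Coprime.prod_right (fun r hr => ?_)
      exact (Nat.coprime_primes hq (hp r (mem_insert_of_mem hr))).mpr
        (fun h => hqs (h ▸ hr))
    rw [Finset.prod_insert hqs, Finset.prod_insert hqs, Nat.totient_mul hcop,
      Nat.totient_prime hq, ih (fun r hr => hp r (mem_insert_of_mem hr))]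

lemma prod_one_sub_ge : ∀ (s : Finset ℕ), (∀ p ∈ s, 1 ≤ p) →
    1 - ∑ p ∈ s, (1/(p:ℝ)) ≤ ∏ p ∈ s, (1 - 1/(p:ℝ)) := by
  intro s
  induction s using Finset.induction with
  | empty => simp
  | @insert q s hqs ih =>
    intro hp
    have hq1 : (1:ℝ) ≤ q := by exact_mod_cast hp q (mem_insert_self _ _)
    have h1 : 0 ≤ 1 - 1/(q:ℝ) := by
      have : 1/(q:ℝ) ≤ 1 := by rw [div_le_one] <;> linarith
      linarith
    have hsum : (0:ℝ) ≤ ∑ p ∈ s, (1/(p:ℝ)) := Finset.sum_nonneg (fun p _ => by positivity)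
    have ihh := ih (fun p hps => hp p (mem_insert_of_mem hps))
    rw [Finset.prod_insert hqs, Finset.sum_insert hqs]
    have hqpos : 0 ≤ 1/(q:ℝ) := by positivity
    nlinarith [mul_le_mul_of_nonneg_left ihh h1]

lemma totient_eq_prod_real (m : ℕ) :
    (Nat.totient m : ℝ) = m * ∏ p ∈ m.primeFactors, (1 - 1/(p:ℝ)) := by
  have h := congrArg (fun q : ℚ => (q : ℝ)) (Nat.totient_eq_mul_prod_factors m)
  push_cast at h
  simpa [one_div] using h

/-- Weight function: sum of reciprocals of prime factors exceeding `y`. -/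
noncomputable def W (y m : ℕ) : ℝ := ∑ p ∈ m.primeFactors.filter (fun p => y < p), (1/(p:ℝ))

lemma W_nonneg (y m : ℕ) : 0 ≤ W y m :=
  Finset.sum_nonneg (fun p _ => by positivity)

/-- Counting elements of a finset inside `[1,x]` whose pairwise differences are
divisible by `N`. -/
lemma card_le_div_add_one {N x : ℕ} (hN : 0 < N) {S : Finset ℕ} (hS : S ⊆ Finset.Icc 1 x)
    (h : ∀ m ∈ S, ∀ n ∈ S, m ≤ n → N ∣ n - m) : S.card ≤ x / N + 1 := by
  have hmaps : ∀ n ∈ S, n / N ∈ Finset.range (x / N + 1) := by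
    intro n hn
    have hx : n ≤ x := (Finset.mem_Icc.mp (hS hn)).2
    exact Finset.mem_range.mpr (Nat.lt_succ_of_le (Nat.div_le_div_right hx))
  have hinj : ∀ m ∈ S, ∀ n ∈ S, m / N = n / N → m = n := by
    intro m hm n hn hdiv
    rcases le_total m n with hmn | hmn
    · obtain ⟨c, hc⟩ := h m hm n hn hmn
      have h1 := Nat.div_add_mod m N
      have h2 := Nat.div_add_mod n N
      have h3 : m % N < N := Nat.mod_lt _ hN
      have h4 : n % N < N := Nat.mod_lt _ hN
      rw [hdiv] at h1
      have hlt : n - m < N := by omega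
      have := Nat.eq_zero_of_dvd_of_lt ⟨c, hc⟩ hlt |>.symm
      omega
    · obtain ⟨c, hc⟩ := h n hn m hm hmn
      have h1 := Nat.div_add_mod m N
      have h2 := Nat.div_add_mod n N
      have h3 : m % N < N := Nat.mod_lt _ hN
      have h4 : n % N < N := Nat.mod_lt _ hN
      rw [hdiv] at h1
      have hlt : m - n < N := by omega
      have := Nat.eq_zero_of_dvd_of_lt ⟨c, hc⟩ hlt |>.symm
      omega
  calc S.card ≤ (Finset.range (x / N + 1)).card :=
        Finset.card_le_card_of_injOn (fun n => n / N) hmaps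
          (fun m hm n hn => hinj m hm n hn)
    _ = x / N + 1 := Finset.card_range _

/-- Lower bound for the number of elements of an AP inside `[1,x]` above `n0`. -/
lemma card_ap_ge (M r' n0 x : ℕ) (hM : 0 < M) (hr : r' < M) :
    x / M - 1 - n0 ≤ ((Finset.Icc 1 x).filter (fun n => n % M = r' ∧ n0 < n)).card := by
  classical
  have hinj : ∀ t ∈ Finset.Icc (n0+1) (x / M - 1), ∀ t' ∈ Finset.Icc (n0+1) (x / M - 1),
      r' + t * M = r' + t' * M → t = t' := by
    intro t _ t' _ heq
    have : t * M = t' * M := by omega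
    exact Nat.eq_of_mul_eq_mul_right hM this
  have hmaps : ∀ t ∈ Finset.Icc (n0+1) (x / M - 1),
      r' + t * M ∈ (Finset.Icc 1 x).filter (fun n => n % M = r' ∧ n0 < n) := by
    intro t ht
    rw [Finset.mem_Icc] at ht
    have h1 : 1 ≤ x / M := by omega
    have h2 : (t + 1) * M ≤ (x / M) * M := Nat.mul_le_mul_right _ (by omega)
    have h3 : (x / M) * M ≤ x := Nat.div_mul_le_self x M
    refine Finset.mem_filter.mpr ⟨Finset.mem_Icc.mpr ⟨by nlinarith, by nlinarith⟩, ?_, ?_⟩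
    · rw [Nat.add_mul_mod_self_right]; exact Nat.mod_eq_of_lt hr
    · have : t ≤ t * M := Nat.le_mul_of_pos_right t hM
      omega
  calc x / M - 1 - n0 = (Finset.Icc (n0+1) (x / M - 1)).card := by
        rw [Nat.card_Icc]; omega
    _ ≤ _ := Finset.card_le_card_of_injOn (fun t => r' + t * M) hmaps hinj

/-- Tail bound `∑_{m=y+1}^{X} 1/m² ≤ 1/y`. -/
lemma sum_inv_sq_tail (y : ℕ) (hy : 1 ≤ y) (X : ℕ) :
    ∑ m ∈ Finset.Icc (y+1) X, (1/((m:ℝ))^2) ≤ 1/(y:ℝ) := by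
  have hy1 : (1:ℝ) ≤ (y:ℝ) := by exact_mod_cast hy
  rcases le_or_gt X y with h | h
  · rw [Finset.Icc_eq_empty (by omega)]
    simp
  · have key : ∀ Z, y ≤ Z → ∑ m ∈ Finset.Icc (y+1) Z, (1/((m:ℝ))^2) ≤ 1/(y:ℝ) - 1/(Z:ℝ) := by
      intro Z hZ
      induction Z, hZ using Nat.le_induction with
      | base =>
        rw [Finset.Icc_eq_empty (by omega)]
        simp
      | succ Z hZ ih =>
        rw [Finset.sum_Icc_succ_top (by omega : y+1 ≤ Z+1)]
        have hZ1 : (1:ℝ) ≤ (Z:ℝ) := by exact_mod_cast hy.trans hZ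
        have h0 : (0:ℝ) < (Z:ℝ) := by linarith
        have h1 : (0:ℝ) < (Z:ℝ)+1 := by linarith
        have hstep : 1/((Z:ℝ)+1)^2 ≤ 1/(Z:ℝ) - 1/((Z:ℝ)+1) := by
          rw [div_sub_div _ _ h0.ne' h1.ne', div_le_div_iff₀ (by positivity) (by positivity)]
          nlinarith
        push_cast at ih ⊢
        linarith
    have hX : (0:ℝ) < (X:ℝ) := by exact_mod_cast (by omega : 0 < X)
    have h2 : (0:ℝ) ≤ 1/(X:ℝ) := by positivity
    linarith [key X (by omega)]

/-- Sum of reciprocals over a subset of `[1,X]` is at most `1 + log X`. -/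
lemma sum_inv_le_log {T : Finset ℕ} {X : ℕ} (hT : T ⊆ Finset.Icc 1 X) :
    ∑ p ∈ T, (1/(p:ℝ)) ≤ 1 + Real.log X := by
  have h1 : ∑ p ∈ T, (1/(p:ℝ)) ≤ ∑ m ∈ Finset.Icc 1 X, (1/(m:ℝ)) :=
    Finset.sum_le_sum_of_subset_of_nonneg hT (fun m _ _ => by positivity)
  have h2 : ∑ m ∈ Finset.Icc 1 X, (1/(m:ℝ)) = ((harmonic X : ℚ) : ℝ) := by
    rw [harmonic_eq_sum_Icc]
    push_cast
    simp [one_div]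
  calc ∑ p ∈ T, (1/(p:ℝ)) ≤ ((harmonic X : ℚ) : ℝ) := h2 ▸ h1
    _ ≤ 1 + Real.log X := harmonic_le_one_add_log X

/-- `W` as a sum over a fixed finset of primes. -/
lemma W_eq_sum_fixed (y x kk aj n : ℕ) (hn : n ≤ x) (haj : 1 ≤ aj) (hajk : aj ≤ kk) :
    W y (n + aj) = ∑ p ∈ (Finset.Icc (y+1) (x+kk)).filter Nat.Prime,
      (if p ∣ n + aj then 1/(p:ℝ) else 0) := by
  rw [← Finset.sum_filter]
  apply Finset.sum_congr _ (fun _ _ => rfl)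
  ext p
  simp only [Finset.mem_filter, Nat.mem_primeFactors, Finset.mem_Icc]
  constructor
  · rintro ⟨⟨hp, hdvd, hne⟩, hy⟩
    have hle : p ≤ n + aj := Nat.le_of_dvd (by omega) hdvd
    exact ⟨⟨⟨by omega, by omega⟩, hp⟩, hdvd⟩
  · rintro ⟨⟨⟨hy1, _⟩, hp⟩, hdvd⟩
    exact ⟨⟨hp, hdvd, by omega⟩, by omega⟩

open scoped Classical in
lemma bad_bound (k M y aj r' x : ℕ) (hM : 0 < M) (hy : 16 * k ≤ y) (hk : 0 < k)
    (ha1 : 1 ≤ aj) (hak : aj ≤ k)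
    (hMy : ∀ p : ℕ, p.Prime → y < p → ¬ p ∣ M) :
    (((Finset.Icc 1 x).filter (fun n => n % M = r' ∧ ¬ (W y (n + aj) ≤ 1/2))).card : ℝ)
      ≤ 2 * ((x/(M:ℝ)) * (1/(y:ℝ)) + (1 + Real.log ((x:ℝ)+(k:ℝ)))) := by
  set A' : Finset ℕ := (Finset.Icc 1 x).filter (fun n => n % M = r') with hA'
  set Bad : Finset ℕ := (Finset.Icc 1 x).filter
    (fun n => n % M = r' ∧ ¬ (W y (n + aj) ≤ 1/2)) with hBad
  set T : Finset ℕ := (Finset.Icc (y+1) (x+k)).filter Nat.Prime with hT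
  have hy1 : 1 ≤ y := by omega
  have hBadA' : Bad ⊆ A' := by
    intro n hn
    rw [hBad, Finset.mem_filter] at hn
    exact Finset.mem_filter.mpr ⟨hn.1, hn.2.1⟩
  -- Markov step
  have step1 : (Bad.card : ℝ) ≤ 2 * ∑ n ∈ A', W y (n + aj) := by
    have h1 : (Bad.card : ℝ) = ∑ _n ∈ Bad, (1:ℝ) := by simp
    have h2 : ∑ _n ∈ Bad, (1:ℝ) ≤ ∑ n ∈ Bad, 2 * W y (n + aj) := by
      apply Finset.sum_le_sum
      intro n hn
      rw [hBad, Finset.mem_filter] at hn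
      have := hn.2.2
      push_neg at this
      linarith
    have h3 : ∑ n ∈ Bad, 2 * W y (n + aj) ≤ ∑ n ∈ A', 2 * W y (n + aj) := by
      apply Finset.sum_le_sum_of_subset_of_nonneg hBadA'
      intro n _ _
      have := W_nonneg y (n + aj)
      linarith
    rw [h1]
    refine le_trans (h2.trans h3) (le_of_eq ?_)
    rw [Finset.mul_sum]
  -- swap the order of summation
  have step2 : ∑ n ∈ A', W y (n + aj)
      = ∑ p ∈ T, ((A'.filter (fun n => p ∣ n + aj)).card : ℝ) * (1/(p:ℝ)) := by
    have hW : ∀ n ∈ A', W y (n + aj) = ∑ p ∈ T, (if p ∣ n + aj then 1/(p:ℝ) else 0) := by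
      intro n hn
      rw [hA', Finset.mem_filter, Finset.mem_Icc] at hn
      exact W_eq_sum_fixed y x k aj n hn.1.2 ha1 hak
    rw [Finset.sum_congr rfl hW, Finset.sum_comm]
    apply Finset.sum_congr rfl
    intro p _
    rw [← Finset.sum_filter, Finset.sum_const]
    simp [mul_comm]
  -- individual counts
  have step3 : ∀ p ∈ T, ((A'.filter (fun n => p ∣ n + aj)).card : ℝ)
      ≤ (x:ℝ)/((M:ℝ)*(p:ℝ)) + 1 := by
    intro p hp
    rw [hT, Finset.mem_filter, Finset.mem_Icc] at hp
    obtain ⟨⟨hyp, hpx⟩, hprime⟩ := hp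
    have hpM : Nat.Coprime M p := by
      rw [Nat.coprime_comm]
      exact (Nat.Prime.coprime_iff_not_dvd hprime).mpr (hMy p hprime (by omega))
    have hcard : (A'.filter (fun n => p ∣ n + aj)).card ≤ x / (M * p) + 1 := by
      apply card_le_div_add_one (Nat.mul_pos hM hprime.pos)
      · intro n hn
        rw [Finset.mem_filter, hA', Finset.mem_filter] at hn
        exact hn.1.1
      · intro m hm n hn hmn
        rw [Finset.mem_filter, hA', Finset.mem_filter] at hm hn
        have hMdvd : M ∣ n - m := by
          have : m ≡ n [MOD M] := by
            unfold Nat.ModEq; omega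
          exact (Nat.modEq_iff_dvd' hmn).mp this
        have hpdvd : p ∣ n - m := by
          have := Nat.dvd_sub hn.2 hm.2
          have heq : (n + aj) - (m + aj) = n - m := by omega
          rwa [heq] at this
        exact Nat.Coprime.mul_dvd_of_dvd_of_dvd hpM hMdvd hpdvd
    calc ((A'.filter (fun n => p ∣ n + aj)).card : ℝ) ≤ ((x / (M * p) + 1 : ℕ) : ℝ) := by
          exact_mod_cast hcard
      _ ≤ (x:ℝ)/((M:ℝ)*(p:ℝ)) + 1 := by
          push_cast
          have := Nat.cast_div_le (α := ℝ) (m := x) (n := M * p)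
          push_cast at this
          linarith
  -- assemble
  have step4 : ∑ n ∈ A', W y (n + aj)
      ≤ (x/(M:ℝ)) * (1/(y:ℝ)) + (1 + Real.log ((x:ℝ)+(k:ℝ))) := by
    rw [step2]
    have hbound : ∑ p ∈ T, ((A'.filter (fun n => p ∣ n + aj)).card : ℝ) * (1/(p:ℝ))
        ≤ ∑ p ∈ T, ((x:ℝ)/((M:ℝ)*(p:ℝ)) + 1) * (1/(p:ℝ)) := by
      apply Finset.sum_le_sum
      intro p hp
      have hp0 : (0:ℝ) < p := by
        rw [hT, Finset.mem_filter] at hp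
        exact_mod_cast hp.2.pos
      exact mul_le_mul_of_nonneg_right (step3 p hp) (by positivity)
    have hsplit : ∑ p ∈ T, ((x:ℝ)/((M:ℝ)*(p:ℝ)) + 1) * (1/(p:ℝ))
        = (x/(M:ℝ)) * (∑ p ∈ T, 1/((p:ℝ))^2) + ∑ p ∈ T, 1/(p:ℝ) := by
      rw [Finset.mul_sum, ← Finset.sum_add_distrib]
      apply Finset.sum_congr rfl
      intro p hp
      have hp0 : (0:ℝ) < p := by
        rw [hT, Finset.mem_filter] at hp
        exact_mod_cast hp.2.pos
      have hM0 : (0:ℝ) < M := by exact_mod_cast hM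
      field_simp
    have hsq : ∑ p ∈ T, 1/((p:ℝ))^2 ≤ 1/(y:ℝ) := by
      refine le_trans (Finset.sum_le_sum_of_subset_of_nonneg ?_ (fun m _ _ => by positivity))
        (sum_inv_sq_tail y hy1 (x+k))
      rw [hT]
      intro p hp
      rw [Finset.mem_filter] at hp
      exact hp.1
    have hlog : ∑ p ∈ T, 1/(p:ℝ) ≤ 1 + Real.log ((x:ℝ)+(k:ℝ)) := by
      have hsub : T ⊆ Finset.Icc 1 (x+k) := by
        rw [hT]
        intro p hp
        rw [Finset.mem_filter, Finset.mem_Icc] at hp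
        exact Finset.mem_Icc.mpr ⟨by omega, hp.1.2⟩
      have := sum_inv_le_log hsub
      push_cast at this
      exact this
    have hxm : (0:ℝ) ≤ x/(M:ℝ) := by positivity
    calc ∑ p ∈ T, ((A'.filter (fun n => p ∣ n + aj)).card : ℝ) * (1/(p:ℝ))
        ≤ (x/(M:ℝ)) * (∑ p ∈ T, 1/((p:ℝ))^2) + ∑ p ∈ T, 1/(p:ℝ) := by
          rw [← hsplit]; exact hbound
      _ ≤ (x/(M:ℝ)) * (1/(y:ℝ)) + (1 + Real.log ((x:ℝ)+(k:ℝ))) := by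
          have := mul_le_mul_of_nonneg_left hsq hxm
          linarith
  linarith

open scoped Classical in
lemma count_good (k M y n0 r' : ℕ) (a : Fin k → ℕ) (hk : 0 < k) (hM : 0 < M) (hrM : r' < M)
    (hy : 16 * k ≤ y) (ha1 : ∀ j, 1 ≤ a j) (hak : ∀ j, a j ≤ k)
    (hMy : ∀ p : ℕ, p.Prime → y < p → ¬ p ∣ M) :
    ∀ᶠ x : ℕ in atTop,
      (x : ℝ) / (2*(M:ℝ)) ≤ (((Finset.Icc 1 x).filter
        (fun n => n % M = r' ∧ n0 < n ∧ ∀ j : Fin k, W y (n + a j) ≤ 1/2)).card : ℝ) := by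
  have hM0 : (0:ℝ) < M := by exact_mod_cast hM
  have hk0 : (0:ℝ) < k := by exact_mod_cast hk
  have hy0 : (0:ℝ) < y := by have : 1 ≤ y := by omega
                             exact_mod_cast this
  -- pointwise estimate
  have main : ∀ x : ℕ, (x:ℝ)/(M:ℝ) - 2 - n0
      - (k:ℝ) * (2 * ((x/(M:ℝ)) * (1/(y:ℝ)) + (1 + Real.log ((x:ℝ)+(k:ℝ)))))
      ≤ (((Finset.Icc 1 x).filter
        (fun n => n % M = r' ∧ n0 < n ∧ ∀ j : Fin k, W y (n + a j) ≤ 1/2)).card : ℝ) := by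
    intro x
    set G : Finset ℕ := (Finset.Icc 1 x).filter
      (fun n => n % M = r' ∧ n0 < n ∧ ∀ j : Fin k, W y (n + a j) ≤ 1/2) with hG
    set A : Finset ℕ := (Finset.Icc 1 x).filter (fun n => n % M = r' ∧ n0 < n) with hA
    set Bad : Fin k → Finset ℕ := fun j => (Finset.Icc 1 x).filter
      (fun n => n % M = r' ∧ ¬ (W y (n + a j) ≤ 1/2)) with hBad
    have hsub : A ⊆ G ∪ Finset.univ.biUnion Bad := by
      intro n hn
      rw [hA, Finset.mem_filter] at hn
      by_cases hW : ∀ j : Fin k, W y (n + a j) ≤ 1/2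
      · exact Finset.mem_union_left _ (Finset.mem_filter.mpr ⟨hn.1, hn.2.1, hn.2.2, hW⟩)
      · push_neg at hW
        obtain ⟨j, hj⟩ := hW
        refine Finset.mem_union_right _ (Finset.mem_biUnion.mpr ⟨j, Finset.mem_univ _, ?_⟩)
        exact Finset.mem_filter.mpr ⟨hn.1, hn.2.1, by linarith⟩
    have hcards : A.card ≤ G.card + ∑ j : Fin k, (Bad j).card := by
      calc A.card ≤ (G ∪ Finset.univ.biUnion Bad).card := Finset.card_le_card hsub
        _ ≤ G.card + (Finset.univ.biUnion Bad).card := Finset.card_union_le _ _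
        _ ≤ G.card + ∑ j : Fin k, (Bad j).card :=
            Nat.add_le_add_left (Finset.card_biUnion_le) _
    have hA_ge : (x:ℝ)/(M:ℝ) - 2 - n0 ≤ (A.card : ℝ) := by
      have h1 := card_ap_ge M r' n0 x hM hrM
      have h2 : ((x / M - 1 - n0 : ℕ) : ℝ) ≤ (A.card : ℝ) := by exact_mod_cast h1
      have h3 : (x:ℝ)/(M:ℝ) - 1 ≤ ((x / M : ℕ) : ℝ) := by
        have hdm := Nat.div_add_mod x M
        have hlt : x % M < M := Nat.mod_lt _ hM
        have : (x:ℝ) = (M:ℝ) * ((x/M : ℕ):ℝ) + ((x % M : ℕ):ℝ) := by exact_mod_cast hdm.symm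
        have hltR : ((x % M : ℕ):ℝ) < (M:ℝ) := by exact_mod_cast hlt
        rw [sub_le_iff_le_add, div_le_iff₀ hM0]
        nlinarith
      have h4 : ((x / M : ℕ) : ℝ) - 1 - n0 ≤ ((x / M - 1 - n0 : ℕ) : ℝ) := by
        rcases le_or_gt (1 + n0) (x / M) with h | h
        · rw [Nat.cast_sub (by omega), Nat.cast_sub (by omega)]
          push_cast
          linarith
        · have : x / M - 1 - n0 = 0 := by omega
          rw [this]
          have : ((x/M : ℕ):ℝ) ≤ 1 + n0 := by exact_mod_cast Nat.le_of_lt h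
          push_cast at *
          linarith
      linarith
    have hBad_le : ∀ j : Fin k, ((Bad j).card : ℝ)
        ≤ 2 * ((x/(M:ℝ)) * (1/(y:ℝ)) + (1 + Real.log ((x:ℝ)+(k:ℝ)))) := by
      intro j
      exact bad_bound k M y (a j) r' x hM hy hk (ha1 j) (hak j) hMy
    have hsum_bad : (∑ j : Fin k, ((Bad j).card:ℝ))
        ≤ (k:ℝ) * (2 * ((x/(M:ℝ)) * (1/(y:ℝ)) + (1 + Real.log ((x:ℝ)+(k:ℝ))))) := by
      calc (∑ j : Fin k, ((Bad j).card:ℝ))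
          ≤ ∑ _j : Fin k, 2 * ((x/(M:ℝ)) * (1/(y:ℝ)) + (1 + Real.log ((x:ℝ)+(k:ℝ)))) :=
            Finset.sum_le_sum (fun j _ => hBad_le j)
        _ = (k:ℝ) * (2 * ((x/(M:ℝ)) * (1/(y:ℝ)) + (1 + Real.log ((x:ℝ)+(k:ℝ))))) := by
            rw [Finset.sum_const, Finset.card_univ, Fintype.card_fin, nsmul_eq_mul]
    have hcardsR : (A.card : ℝ) ≤ (G.card : ℝ) + ∑ j : Fin k, ((Bad j).card:ℝ) := by
      have := hcards
      push_cast
      exact_mod_cast this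
    linarith
  -- eventual bound
  set ε : ℝ := 1/(32*(M:ℝ)*(k:ℝ)) with hε
  have hε0 : 0 < ε := by rw [hε]; positivity
  have hlog := Real.isLittleO_log_id_atTop.def hε0
  have htend : Tendsto (fun x : ℕ => (x:ℝ)+(k:ℝ)) atTop atTop :=
    tendsto_atTop_add_const_right _ _ tendsto_natCast_atTop_atTop
  have hev2 : ∀ᶠ x : ℕ in atTop, ‖Real.log ((x:ℝ)+(k:ℝ))‖ ≤ ε * ‖(x:ℝ)+(k:ℝ)‖ :=
    htend.eventually hlog
  have hx0 : ∀ᶠ x : ℕ in atTop, (8*(M:ℝ))*(2 + (n0:ℝ) + 2*(k:ℝ)) ≤ (x:ℝ) := by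
    have : Tendsto (fun x : ℕ => (x:ℝ)) atTop atTop := tendsto_natCast_atTop_atTop
    exact this.eventually_ge_atTop _
  have hxk : ∀ᶠ x : ℕ in atTop, (k:ℝ) ≤ (x:ℝ) := by
    have : Tendsto (fun x : ℕ => (x:ℝ)) atTop atTop := tendsto_natCast_atTop_atTop
    exact this.eventually_ge_atTop _
  filter_upwards [hev2, hx0, hxk] with x h2 h0 hkx
  have hxpos : (0:ℝ) ≤ (x:ℝ) := by positivity
  have hlogle : Real.log ((x:ℝ)+(k:ℝ)) ≤ ε * ((x:ℝ)+(k:ℝ)) := by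
    have ha := le_abs_self (Real.log ((x:ℝ)+(k:ℝ)))
    have hb : ‖(x:ℝ)+(k:ℝ)‖ = (x:ℝ)+(k:ℝ) := by
      rw [Real.norm_eq_abs, abs_of_nonneg (by linarith)]
    rw [Real.norm_eq_abs] at h2
    rw [hb] at h2
    calc Real.log ((x:ℝ)+(k:ℝ)) ≤ |Real.log ((x:ℝ)+(k:ℝ))| := ha
      _ ≤ ε * ((x:ℝ)+(k:ℝ)) := h2
  have key := main x
  -- arithmetic: show x/M - 2 - n0 - k*(2*((x/M)*(1/y) + 1 + log (x+k))) ≥ x/(2M)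
  have hb1 : (k:ℝ) * (2 * ((x/(M:ℝ)) * (1/(y:ℝ)))) ≤ (x:ℝ)/(8*(M:ℝ)) := by
    have hyge : (16:ℝ)*(k:ℝ) ≤ (y:ℝ) := by exact_mod_cast hy
    have h1 : (1:ℝ)/(y:ℝ) ≤ 1/((16:ℝ)*(k:ℝ)) := by
      apply div_le_div_of_nonneg_left _ _ hyge <;> positivity
    have h2 : (0:ℝ) ≤ x/(M:ℝ) := by positivity
    calc (k:ℝ) * (2 * ((x/(M:ℝ)) * (1/(y:ℝ))))
        ≤ (k:ℝ) * (2 * ((x/(M:ℝ)) * (1/((16:ℝ)*(k:ℝ))))) := by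
          apply mul_le_mul_of_nonneg_left _ (le_of_lt hk0)
          apply mul_le_mul_of_nonneg_left _ (by norm_num)
          exact mul_le_mul_of_nonneg_left h1 h2
      _ = (x:ℝ)/(8*(M:ℝ)) := by field_simp; ring
  have hb2 : (k:ℝ) * (2 * Real.log ((x:ℝ)+(k:ℝ))) ≤ (x:ℝ)/(8*(M:ℝ)) := by
    have h1 : (x:ℝ)+(k:ℝ) ≤ 2*(x:ℝ) := by linarith
    have h2 : Real.log ((x:ℝ)+(k:ℝ)) ≤ ε * (2*(x:ℝ)) := by
      have : ε * ((x:ℝ)+(k:ℝ)) ≤ ε * (2*(x:ℝ)) := mul_le_mul_of_nonneg_left h1 hε0.le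
      linarith
    calc (k:ℝ) * (2 * Real.log ((x:ℝ)+(k:ℝ))) ≤ (k:ℝ) * (2 * (ε * (2*(x:ℝ)))) := by
          apply mul_le_mul_of_nonneg_left _ (le_of_lt hk0)
          apply mul_le_mul_of_nonneg_left h2 (by norm_num)
      _ = (x:ℝ)/(8*(M:ℝ)) := by rw [hε]; field_simp; ring
  have hb3 : 2 + (n0:ℝ) + 2*(k:ℝ) ≤ (x:ℝ)/(8*(M:ℝ)) := by
    rw [le_div_iff₀ (by positivity)]
    nlinarith
  have hfinal : (x:ℝ)/(2*(M:ℝ)) ≤ (x:ℝ)/(M:ℝ) - 2 - n0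
      - (k:ℝ) * (2 * ((x/(M:ℝ)) * (1/(y:ℝ)) + (1 + Real.log ((x:ℝ)+(k:ℝ))))) := by
    have hexpand : (k:ℝ) * (2 * ((x/(M:ℝ)) * (1/(y:ℝ)) + (1 + Real.log ((x:ℝ)+(k:ℝ)))))
        = (k:ℝ) * (2 * ((x/(M:ℝ)) * (1/(y:ℝ)))) + 2*(k:ℝ)
          + (k:ℝ) * (2 * Real.log ((x:ℝ)+(k:ℝ))) := by ring
    have hdiv : (x:ℝ)/(M:ℝ) = (x:ℝ)/(2*(M:ℝ)) + 4*((x:ℝ)/(8*(M:ℝ))) := by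
      field_simp
      ring
    linarith
  linarith

lemma exists_avoid_residue (k p : ℕ) (hp : p.Prime) (hkp : k < p) (a : Fin k → ℕ) :
    ∃ b : ℕ, ∀ j : Fin k, ¬ p ∣ b + a j := by
  by_contra hcon
  push_neg at hcon
  have hchoice : ∀ b : Fin p, ∃ j : Fin k, p ∣ (b:ℕ) + a j := fun b => hcon b
  classical
  choose f hf using hchoice
  have hinj : Function.Injective f := by
    intro b b' hbb
    have h1 := hf b
    have h2 := hf b'
    rw [hbb] at h1
    rcases le_total (b:ℕ) (b':ℕ) with hle | hle
    · have hd : p ∣ (b':ℕ) - (b:ℕ) := by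
        have := Nat.dvd_sub h2 h1
        have heq : ((b':ℕ) + a (f b')) - ((b:ℕ) + a (f b')) = (b':ℕ) - (b:ℕ) := by omega
        rwa [heq] at this
      have : (b':ℕ) - (b:ℕ) < p := by omega
      have := Nat.eq_zero_of_dvd_of_lt hd this
      · exact Fin.ext (by omega)
    · have hd : p ∣ (b:ℕ) - (b':ℕ) := by
        have := Nat.dvd_sub h1 h2
        have heq : ((b:ℕ) + a (f b')) - ((b':ℕ) + a (f b')) = (b:ℕ) - (b':ℕ) := by omega
        rwa [heq] at this
      have : (b:ℕ) - (b':ℕ) < p := by omega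
      have := Nat.eq_zero_of_dvd_of_lt hd this
      · exact Fin.ext (by omega)
  have := Fintype.card_le_of_injective f hinj
  simp at this
  omega

lemma construction (k : ℕ) (hk : 2 ≤ k) (a : Fin k → ℕ)
    (ha1 : ∀ j, 1 ≤ a j) (hak : ∀ j, a j ≤ k) (hinj : Function.Injective a)
    (S : Fin k → Finset ℕ) (hSp : ∀ j, ∀ q ∈ S j, q.Prime ∧ k < q)
    (hdisj : ∀ i j : Fin k, i ≠ j → Disjoint (S i) (S j)) (y : ℕ)
    (hSy : ∀ j, ∀ q ∈ S j, q ≤ y) (hky : k ≤ y) :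
    ∃ M r : ℕ, 0 < M ∧ (∀ p : ℕ, p.Prime → y < p → ¬ p ∣ M) ∧
      ∀ n : ℕ, 0 < n → n % M = r % M →
        ∀ j : Fin k, ∃ m : ℕ,
          n + a j = (a j * ∏ q ∈ S j, q) * m ∧
          (∀ p : ℕ, p.Prime → p ∣ m → y < p) := by
  classical
  set P : Finset ℕ := (Finset.Icc 1 y).filter Nat.Prime with hP
  have hmemP : ∀ p : ℕ, p.Prime → p ≤ y → p ∈ P := by
    intro p hp hpy
    exact Finset.mem_filter.mpr ⟨Finset.mem_Icc.mpr ⟨hp.pos, hpy⟩, hp⟩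
  set ν : ℕ → ℕ := fun p => if p ≤ k then p^k else if ∃ j, p ∈ S j then p^2 else p with hν
  set βo : ℕ → ℕ := fun p => if h : p.Prime ∧ k < p then
      Classical.choose (exists_avoid_residue k p h.1 h.2 a) else 0 with hβo
  set β : ℕ → ℕ := fun p => if p ≤ k then 0 else if h : ∃ j, p ∈ S j then
      p - a (Classical.choose h) else βo p with hβ
  -- each ν p is a positive power of p
  have hνpow : ∀ p, ∃ e, 1 ≤ e ∧ ν p = p ^ e := by
    intro p
    rw [hν]
    by_cases h1 : p ≤ k
    · exact ⟨k, by omega, by simp [h1]⟩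
    · by_cases h2 : ∃ j, p ∈ S j
      · exact ⟨2, by omega, by simp [h1, h2]⟩
      · exact ⟨1, le_refl _, by simp [h1, h2]⟩
  have hν0 : ∀ p ∈ P, ν p ≠ 0 := by
    intro p hp
    obtain ⟨e, _, he⟩ := hνpow p
    have hpp : p.Prime := (Finset.mem_filter.mp hp).2
    rw [he]
    exact pow_ne_zero _ hpp.pos.ne'
  have hpair : Set.Pairwise (P : Set ℕ) (Function.onFun Nat.Coprime ν) := by
    intro p hp q hq hne
    obtain ⟨e1, _, he1⟩ := hνpow p
    obtain ⟨e2, _, he2⟩ := hνpow q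
    have hpp : p.Prime := (Finset.mem_filter.mp hp).2
    have hqq : q.Prime := (Finset.mem_filter.mp hq).2
    show Nat.Coprime (ν p) (ν q)
    rw [he1, he2]
    exact Nat.Coprime.pow e1 e2 ((Nat.coprime_primes hpp hqq).mpr hne)
  obtain ⟨r, hr⟩ := Nat.chineseRemainderOfFinset β ν P hν0 hpair
  refine ⟨∏ p ∈ P, ν p, r, ?_, ?_, ?_⟩
  · apply Finset.prod_pos
    intro p hp
    exact Nat.pos_of_ne_zero (hν0 p hp)
  · intro p hp hyp hdvd
    rw [(Nat.Prime.prime hp).dvd_finset_prod_iff] at hdvd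
    obtain ⟨q, hqP, hpq⟩ := hdvd
    obtain ⟨e, _, he⟩ := hνpow q
    rw [he] at hpq
    have hqq : q.Prime := (Finset.mem_filter.mp hqP).2
    have : p = q := (Nat.prime_dvd_prime_iff_eq hp hqq).mp (hp.dvd_of_dvd_pow hpq)
    have hqy : q ≤ y := (Finset.mem_Icc.mp (Finset.mem_filter.mp hqP).1).2
    omega
  · intro n hn hmod j
    have hcong : ∀ p ∈ P, n ≡ β p [MOD ν p] := by
      intro p hp
      have h1 : n ≡ r [MOD ∏ p ∈ P, ν p] := hmod
      have h2 : n ≡ r [MOD ν p] := Nat.ModEq.of_dvd (Finset.dvd_prod_of_mem ν hp) h1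
      exact h2.trans (hr p hp)
    -- the S j primes divide n + a j
    have hQdvd : ∀ q ∈ S j, q ∣ n + a j := by
      intro q hq
      have hqp : q.Prime := (hSp j q hq).1
      have hqk : k < q := (hSp j q hq).2
      have hqP : q ∈ P := hmemP q hqp (hSy j q hq)
      have hνq : ν q = q^2 := by
        rw [hν]
        simp only [if_neg (by omega : ¬ q ≤ k)]
        rw [if_pos ⟨j, hq⟩]
      have hβq : β q = q - a j := by
        rw [hβ]
        simp only [if_neg (by omega : ¬ q ≤ k)]
        rw [dif_pos ⟨j, hq⟩]
        congr 1
        have hch := Classical.choose_spec (⟨j, hq⟩ : ∃ i, q ∈ S i)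
        by_contra hne
        have hd := hdisj _ _ (fun h => hne (congrArg a h))
        exact (Finset.disjoint_left.mp hd) hch hq
      have h1 : n ≡ q - a j [MOD q^2] := hβq ▸ hνq ▸ hcong q hqP
      have h2 : n ≡ q - a j [MOD q] := Nat.ModEq.of_dvd (dvd_pow_self q (by omega)) h1
      have h3 : n + a j ≡ (q - a j) + a j [MOD q] := h2.add_right _
      have h4 : (q - a j) + a j = q := by
        have := hak j
        omega
      rw [h4] at h3
      have h5 : n + a j ≡ 0 [MOD q] := h3.trans (Nat.modEq_zero_iff_dvd.mpr dvd_rfl)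
      exact Nat.modEq_zero_iff_dvd.mp h5
    -- a j divides n
    have hadvd : a j ∣ n := by
      rw [Nat.dvd_iff_prime_pow_dvd_dvd]
      intro p t hpp hpt
      rcases Nat.eq_zero_or_pos t with ht | ht
      · simp [ht]
      have hp : p.Prime := hpp
      have hpa : p ∣ a j := dvd_trans (dvd_pow_self p ht.ne') hpt
      have hpk : p ≤ k := le_trans (Nat.le_of_dvd (ha1 j) hpa) (hak j)
      have hpP : p ∈ P := hmemP p hp (le_trans hpk hky)
      have hνp : ν p = p^k := by rw [hν]; simp [hpk]
      have hβp : β p = 0 := by rw [hβ]; simp [hpk]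
      have h1 : n ≡ 0 [MOD p^k] := hβp ▸ hνp ▸ hcong p hpP
      have h2 : p^k ∣ n := Nat.modEq_zero_iff_dvd.mp h1
      have htk : t ≤ k := by
        by_contra hcon
        push_neg at hcon
        have h3 : p^t ≤ a j := Nat.le_of_dvd (ha1 j) hpt
        have h4 : a j ≤ k := hak j
        have h5 : k < 2^k := Nat.lt_two_pow_self
        have h6 : (2:ℕ)^k ≤ p^k := Nat.pow_le_pow_left hp.two_le k
        have h7 : p^k ≤ p^t := Nat.pow_le_pow_right hp.pos (by omega)
        omega
      exact dvd_trans (pow_dvd_pow p htk) h2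
    have hQ : (∏ q ∈ S j, q) ∣ n + a j :=
      Finset.prod_primes_dvd (n + a j) (fun q hq => (hSp j q hq).1.prime) hQdvd
    have hcop : Nat.Coprime (a j) (∏ q ∈ S j, q) := by
      apply Nat.Coprime.prod_right
      intro q hq
      have hqp := (hSp j q hq).1
      have hqk := (hSp j q hq).2
      exact ((hqp.coprime_iff_not_dvd).mpr
        (fun hdvd => by
          have := Nat.le_of_dvd (ha1 j) hdvd
          have := hak j
          omega)).symm
    have hsdvd : (a j * ∏ q ∈ S j, q) ∣ n + a j :=
      Nat.Coprime.mul_dvd_of_dvd_of_dvd hcop (dvd_add hadvd dvd_rfl) hQ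
    set s : ℕ := a j * ∏ q ∈ S j, q with hs
    refine ⟨(n + a j) / s, (Nat.mul_div_cancel' hsdvd).symm, ?_⟩
    intro p hpp hpm
    by_contra hcon
    push_neg at hcon
    have hpP : p ∈ P := hmemP p hpp hcon
    obtain ⟨m', hm'⟩ := hpm
    have heq : n + a j = s * p * m' := by
      have := Nat.mul_div_cancel' hsdvd
      rw [← this, hm']
      ring
    by_cases hpk : p ≤ k
    · -- small prime case
      set t : ℕ := (a j).factorization p with ht
      have hpt : p^t ∣ a j := Nat.ordProj_dvd _ _
      have h1 : p^(t+1) ∣ n + a j := by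
        rw [heq, hs]
        have : p^(t+1) = p^t * p := by ring
        rw [this]
        have hd1 : p^t * p ∣ (a j) * p := mul_dvd_mul hpt dvd_rfl
        have hd2 : (a j) * p ∣ (a j * ∏ q ∈ S j, q) * p * m' :=
          ⟨(∏ q ∈ S j, q) * m', by ring⟩
        exact dvd_trans hd1 hd2
      have hνp : ν p = p^k := by rw [hν]; simp [hpk]
      have hβp : β p = 0 := by rw [hβ]; simp [hpk]
      have h2 : p^k ∣ n := Nat.modEq_zero_iff_dvd.mp (hβp ▸ hνp ▸ hcong p hpP)
      have htk : t + 1 ≤ k := by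
        have h3 : p^t ≤ a j := Nat.le_of_dvd (ha1 j) hpt
        have h4 : a j ≤ k := hak j
        have h5 : k < 2^k := Nat.lt_two_pow_self
        have h6 : (2:ℕ)^k ≤ p^k := Nat.pow_le_pow_left hpp.two_le k
        by_contra hcon2
        push_neg at hcon2
        have h7 : p^k ≤ p^t := Nat.pow_le_pow_right hpp.pos (by omega)
        omega
      have h3 : p^(t+1) ∣ n := dvd_trans (pow_dvd_pow p htk) h2
      have h4 : p^(t+1) ∣ a j := by
        have := Nat.dvd_sub h1 h3
        have heq2 : (n + a j) - n = a j := by omega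
        rwa [heq2] at this
      exact Nat.pow_succ_factorization_not_dvd (by have := ha1 j; omega) hpp h4
    · by_cases hpSj : p ∈ S j
      · -- p ∈ S j : exact valuation 1 forced
        have hνp : ν p = p^2 := by
          rw [hν]
          simp only [if_neg hpk]
          rw [if_pos ⟨j, hpSj⟩]
        have hβp : β p = p - a j := by
          rw [hβ]
          simp only [if_neg hpk]
          rw [dif_pos ⟨j, hpSj⟩]
          congr 1
          have hch := Classical.choose_spec (⟨j, hpSj⟩ : ∃ i, p ∈ S i)
          by_contra hne
          have hd := hdisj _ _ (fun h => hne (congrArg a h))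
          exact (Finset.disjoint_left.mp hd) hch hpSj
        have h1 : n ≡ p - a j [MOD p^2] := hβp ▸ hνp ▸ hcong p hpP
        have h2 : n + a j ≡ p [MOD p^2] := by
          have h3 := h1.add_right (a j)
          have h4 : (p - a j) + a j = p := by
            have h5 := hak j
            have h6 := (hSp j p hpSj).2
            omega
          rwa [h4] at h3
        have hsq : p^2 ∣ n + a j := by
          rw [heq, hs]
          have hd1 : p ∣ ∏ q ∈ S j, q := Finset.dvd_prod_of_mem _ hpSj
          obtain ⟨Q', hQ'⟩ := hd1
          refine ⟨a j * Q' * m', ?_⟩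
          rw [hQ']
          ring
        have h5 : p ≡ 0 [MOD p^2] := by
          have h6 : n + a j ≡ 0 [MOD p^2] := Nat.modEq_zero_iff_dvd.mpr hsq
          exact h2.symm.trans h6
        have h7 : p^2 ∣ p := Nat.modEq_zero_iff_dvd.mp h5
        have h8 : p^2 ≤ p := Nat.le_of_dvd hpp.pos h7
        have h9 := hpp.two_le
        nlinarith
      · by_cases hpS : ∃ i, p ∈ S i
        · -- p ∈ S i for i ≠ j
          obtain ⟨i, hpi⟩ := hpS
          have hνp : ν p = p^2 := by
            rw [hν]
            simp only [if_neg hpk]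
            rw [if_pos ⟨i, hpi⟩]
          set i' : Fin k := Classical.choose (⟨i, hpi⟩ : ∃ i, p ∈ S i) with hi'
          have hpi' : p ∈ S i' := Classical.choose_spec (⟨i, hpi⟩ : ∃ i, p ∈ S i)
          have hβp : β p = p - a i' := by
            rw [hβ]
            simp only [if_neg hpk]
            rw [dif_pos ⟨i, hpi⟩]
          have hi'j : i' ≠ j := fun h => hpSj (h ▸ hpi')
          have h1 : n ≡ p - a i' [MOD p^2] := hβp ▸ hνp ▸ hcong p hpP
          have h2 : n ≡ p - a i' [MOD p] := Nat.ModEq.of_dvd (dvd_pow_self p (by omega)) h1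
          have h3 : n + a i' ≡ p [MOD p] := by
            have h4 := h2.add_right (a i')
            have hki' : k < p := by omega
            have h5 : (p - a i') + a i' = p := by
              have := hak i'
              omega
            rwa [h5] at h4
          have h6 : p ∣ n + a i' := by
            have := h3.trans (Nat.modEq_zero_iff_dvd.mpr dvd_rfl)
            exact Nat.modEq_zero_iff_dvd.mp this
          have h7 : p ∣ n + a j := by
            rw [heq]
            exact ⟨s * m', by ring⟩
          have hne : a i' ≠ a j := fun h => hi'j (hinj h)
          rcases lt_or_gt_of_ne hne with hlt | hgt
          · have hd : p ∣ (n + a j) - (n + a i') := Nat.dvd_sub h7 h6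
            have heq2 : (n + a j) - (n + a i') = a j - a i' := by omega
            rw [heq2] at hd
            have h8 : p ≤ a j - a i' := Nat.le_of_dvd (by omega) hd
            have := hak j
            omega
          · have hd : p ∣ (n + a i') - (n + a j) := Nat.dvd_sub h6 h7
            have heq2 : (n + a i') - (n + a j) = a i' - a j := by omega
            rw [heq2] at hd
            have h8 : p ≤ a i' - a j := Nat.le_of_dvd (by omega) hd
            have := hak i'
            omega
        · -- generic prime : avoided residue
          have hνp : ν p = p := by
            rw [hν]
            simp only [if_neg hpk]
            rw [if_neg hpS]
          have hβp : β p = βo p := by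
            rw [hβ]
            simp only [if_neg hpk]
            rw [dif_neg hpS]
          have hcond : p.Prime ∧ k < p := ⟨hpp, by omega⟩
          have havoid : ∀ j' : Fin k, ¬ p ∣ βo p + a j' := by
            have hbo : βo p = Classical.choose (exists_avoid_residue k p hcond.1 hcond.2 a) := by
              simp only [hβo]
              rw [dif_pos hcond]
            rw [hbo]
            exact Classical.choose_spec (exists_avoid_residue k p hcond.1 hcond.2 a)
          have h1 : n ≡ βo p [MOD p] := by
            have h0 := hcong p hpP
            rw [hνp, hβp] at h0
            exact h0
          have h2 : n + a j ≡ βo p + a j [MOD p] := h1.add_right _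
          have h3 : p ∣ n + a j := by
            rw [heq]
            exact ⟨s * m', by ring⟩
          have h4 : βo p + a j ≡ 0 [MOD p] :=
            h2.symm.trans (Nat.modEq_zero_iff_dvd.mpr h3)
          exact havoid j (Nat.modEq_zero_iff_dvd.mp h4)

set_option maxHeartbeats 1000000 in
open scoped Classical in
lemma key_lemma (k : ℕ) (hk : 2 ≤ k) (a : Fin k → ℕ)
    (ha1 : ∀ j, 1 ≤ a j) (hak : ∀ j, a j ≤ k) (hinj : Function.Injective a) :
    ∃ M y r : ℕ, 0 < M ∧ 16*k ≤ y ∧ (∀ p : ℕ, p.Prime → y < p → ¬ p ∣ M) ∧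
      ∀ n : ℕ, k < n → n % M = r % M → (∀ j : Fin k, W y (n + a j) ≤ 1/2) →
        ∀ i : ℕ, ∀ h : i + 1 < k,
          Nat.totient (n + a ⟨i+1, h⟩) < Nat.totient (n + a ⟨i, Nat.lt_of_succ_lt h⟩) := by
  classical
  have hk0 : (0:ℝ) < k := by exact_mod_cast (by omega : 0 < k)
  set u : ℕ → ℝ := fun i => if h : i < k then
      (Nat.totient (a ⟨i,h⟩) : ℝ) / ((a ⟨i,h⟩ : ℕ):ℝ) else 1 with hu
  set c : ℕ → ℝ := fun i => 1/((k:ℝ) * 8^i) with hc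
  have hcpos : ∀ i, 0 < c i := fun i => by rw [hc]; positivity
  have hcu : ∀ i, c i ≤ u i := by
    intro i
    simp only [hc, hu]
    by_cases h : i < k
    · rw [dif_pos h]
      have hb1 : 1 ≤ a ⟨i,h⟩ := ha1 _
      have hbk : a ⟨i,h⟩ ≤ k := hak _
      have hφ : 1 ≤ Nat.totient (a ⟨i,h⟩) := Nat.totient_pos.mpr (by omega)
      have hb0 : (0:ℝ) < (a ⟨i,h⟩:ℝ) := by exact_mod_cast hb1
      have h1 : (1:ℝ) ≤ (Nat.totient (a ⟨i,h⟩) : ℝ) := by exact_mod_cast hφ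
      have h8 : (1:ℝ) ≤ 8^i := one_le_pow₀ (by norm_num)
      have hbkR : ((a ⟨i,h⟩:ℕ):ℝ) ≤ (k:ℝ) := by exact_mod_cast hbk
      rw [div_le_div_iff₀ (by positivity) hb0]
      nlinarith [mul_nonneg (sub_nonneg.mpr h1) (by positivity : (0:ℝ) ≤ (k:ℝ)*8^i),
        mul_nonneg hk0.le (sub_nonneg.mpr h8)]
    · rw [dif_neg h]
      rw [div_le_one (by positivity)]
      have h8 : (1:ℝ) ≤ 8^i := one_le_pow₀ (by norm_num)
      have hk2 : (2:ℝ) ≤ (k:ℝ) := by exact_mod_cast hk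
      nlinarith
  obtain ⟨S0, B, hSB, hdisj0, hwin⟩ := greedy_family k u c hcpos hcu k
  set y : ℕ := max (16*k) B with hy
  set S : Fin k → Finset ℕ := fun j => S0 j.val with hS
  have hSp : ∀ j, ∀ q ∈ S j, q.Prime ∧ k < q :=
    fun j q hq => ⟨(hSB j.val q hq).1, (hSB j.val q hq).2.1⟩
  have hdisj : ∀ i j : Fin k, i ≠ j → Disjoint (S i) (S j) :=
    fun i j hij => hdisj0 i.val j.val (fun hv => hij (Fin.ext hv))
  have hSy : ∀ j, ∀ q ∈ S j, q ≤ y :=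
    fun j q hq => le_trans (hSB j.val q hq).2.2 (le_max_right _ _)
  have hky : k ≤ y := le_trans (by omega) (le_max_left (16*k) B)
  obtain ⟨M, r, hM, hMy', hmain⟩ := construction k hk a ha1 hak hinj S hSp hdisj y hSy hky
  refine ⟨M, y, r, hM, le_max_left _ _, hMy', ?_⟩
  intro n hkn hmod hW i h
  have hn0 : 0 < n := by omega
  have hnk : (k:ℝ) ≤ (n:ℝ) := by exact_mod_cast hkn.le
  -- the main totient estimate, for any index
  have main_est : ∀ (iv : ℕ) (hiv : iv < k) (m : ℕ),
      n + a ⟨iv, hiv⟩ = (a ⟨iv,hiv⟩ * ∏ q ∈ S0 iv, q) * m →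
      (∀ p : ℕ, p.Prime → p ∣ m → y < p) →
      ((Nat.totient (n + a ⟨iv,hiv⟩) : ℝ)
          ≤ (u iv * ∏ q ∈ S0 iv, (1 - 1/(q:ℝ))) * ((n:ℝ) + ((a ⟨iv,hiv⟩ : ℕ):ℝ))
       ∧ (W y (n + a ⟨iv,hiv⟩) ≤ 1/2 →
          (u iv * ∏ q ∈ S0 iv, (1 - 1/(q:ℝ))) * ((n:ℝ) + ((a ⟨iv,hiv⟩ : ℕ):ℝ)) * (1/2)
            ≤ (Nat.totient (n + a ⟨iv,hiv⟩) : ℝ))) := by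
    intro iv hiv m heq hm
    set j : Fin k := ⟨iv, hiv⟩ with hj
    have hSj : S j = S0 iv := rfl
    set Q : ℕ := ∏ q ∈ S0 iv, q with hQdef
    set s : ℕ := a j * Q with hsdef
    have hQprimes : ∀ q ∈ S0 iv, q.Prime ∧ k < q ∧ q ≤ y :=
      fun q hq => ⟨(hSp j q hq).1, (hSp j q hq).2, hSy j q hq⟩
    have hQpos : 0 < Q := Finset.prod_pos (fun q hq => (hQprimes q hq).1.pos)
    have haj1 : 1 ≤ a j := ha1 j
    have hspos : 0 < s := Nat.mul_pos (by omega) hQpos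
    have hm0 : 0 < m := by
      rcases Nat.eq_zero_or_pos m with h0 | h0
      · rw [h0, mul_zero] at heq; omega
      · exact h0
    have hcop_aQ : Nat.Coprime (a j) Q := by
      apply Nat.Coprime.prod_right
      intro q hq
      exact (((hQprimes q hq).1.coprime_iff_not_dvd).mpr
        (fun hdvd => by
          have h1 := Nat.le_of_dvd (by omega) hdvd
          have h2 := hak j
          have h3 := (hQprimes q hq).2.1
          omega)).symm
    have hcops : Nat.Coprime s m := by
      by_contra hnc
      obtain ⟨p, hpp, hpd⟩ := Nat.exists_prime_and_dvd
        (fun h1 => hnc (Nat.coprime_iff_gcd_eq_one.mpr h1))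
      have hps : p ∣ s := dvd_trans hpd (Nat.gcd_dvd_left _ _)
      have hpm : p ∣ m := dvd_trans hpd (Nat.gcd_dvd_right _ _)
      have hpy : y < p := hm p hpp hpm
      rw [hsdef] at hps
      rcases (Nat.Prime.dvd_mul hpp).mp hps with h1 | h1
      · have := Nat.le_of_dvd (by omega) h1
        have := hak j
        omega
      · rw [(Nat.Prime.prime hpp).dvd_finset_prod_iff] at h1
        obtain ⟨q, hqS, hpq⟩ := h1
        have hq := hQprimes q hqS
        have : p = q := (Nat.prime_dvd_prime_iff_eq hpp hq.1).mp hpq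
        omega
    -- totient of s
    have htotQ : Nat.totient Q = ∏ q ∈ S0 iv, (q - 1) :=
      totient_prod_primes _ (fun q hq => (hQprimes q hq).1)
    have hφQ : (Nat.totient Q : ℝ) = (∏ q ∈ S0 iv, (1 - 1/(q:ℝ))) * (Q:ℝ) := by
      rw [htotQ]
      calc ((∏ q ∈ S0 iv, (q-1) : ℕ) : ℝ) = ∏ q ∈ S0 iv, ((q:ℝ) - 1) := by
            rw [Nat.cast_prod]
            refine Finset.prod_congr rfl (fun q hq => ?_)
            have h1 : 1 ≤ q := (hQprimes q hq).1.one_lt.le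
            push_cast [Nat.cast_sub h1]
            ring
        _ = (∏ q ∈ S0 iv, (1 - 1/(q:ℝ))) * (Q:ℝ) := by
            rw [hQdef, Nat.cast_prod, ← Finset.prod_mul_distrib]
            refine Finset.prod_congr rfl (fun q hq => ?_)
            have hq0 : (0:ℝ) < q := by exact_mod_cast (hQprimes q hq).1.pos
            field_simp
    have huj : u iv = (Nat.totient (a j) : ℝ) / ((a j : ℕ):ℝ) := by
      simp only [hu]
      rw [dif_pos hiv]
    have hφs : (Nat.totient s : ℝ) = (u iv * ∏ q ∈ S0 iv, (1 - 1/(q:ℝ))) * (s:ℝ) := by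
      have h1 : Nat.totient s = Nat.totient (a j) * Nat.totient Q := by
        rw [hsdef, Nat.totient_mul hcop_aQ]
      rw [h1, huj, hsdef]
      push_cast
      rw [hφQ]
      have ha0 : ((a j:ℕ):ℝ) ≠ 0 := by
        have : (0:ℝ) < ((a j:ℕ):ℝ) := by exact_mod_cast haj1
        linarith
      field_simp
    have htotR : (Nat.totient (n + a j) : ℝ)
        = (Nat.totient s : ℝ) * (Nat.totient m : ℝ) := by
      rw [heq]
      rw [Nat.totient_mul hcops]
      push_cast
      ring
    have hcastR : ((n:ℝ) + ((a j : ℕ):ℝ)) = (s:ℝ) * (m:ℝ) := by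
      exact_mod_cast heq
    have hφsnn : (0:ℝ) ≤ (Nat.totient s : ℝ) := by positivity
    constructor
    · -- upper bound
      have hmub : (Nat.totient m : ℝ) ≤ (m:ℝ) := by exact_mod_cast Nat.totient_le m
      calc (Nat.totient (n + a j) : ℝ) = (Nat.totient s : ℝ) * (Nat.totient m : ℝ) := htotR
        _ ≤ (Nat.totient s : ℝ) * (m:ℝ) := mul_le_mul_of_nonneg_left hmub hφsnn
        _ = (u iv * ∏ q ∈ S0 iv, (1 - 1/(q:ℝ))) * ((n:ℝ) + ((a j : ℕ):ℝ)) := by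
            rw [hφs, hcastR]
            ring
    · -- lower bound
      intro hWle
      have hmR : (0:ℝ) ≤ (m:ℝ) := by positivity
      have e1 := totient_eq_prod_real m
      have e2 : 1 - ∑ p ∈ m.primeFactors, 1/(p:ℝ)
          ≤ ∏ p ∈ m.primeFactors, (1 - 1/(p:ℝ)) :=
        prod_one_sub_ge _ (fun p hp => (Nat.prime_of_mem_primeFactors hp).one_lt.le)
      have e3 : ∑ p ∈ m.primeFactors, 1/(p:ℝ) ≤ W y (n + a j) := by
        refine Finset.sum_le_sum_of_subset_of_nonneg ?_ (fun p _ _ => by positivity)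
        intro p hp
        have hpp := Nat.prime_of_mem_primeFactors hp
        have hpm := Nat.dvd_of_mem_primeFactors hp
        refine Finset.mem_filter.mpr ⟨Nat.mem_primeFactors.mpr ⟨hpp, ?_, by omega⟩, hm p hpp hpm⟩
        rw [heq]
        exact Dvd.dvd.mul_left hpm _
      have hml : (m:ℝ) * (1/2) ≤ (Nat.totient m : ℝ) := by
        have e4 : (m:ℝ) * (1 - ∑ p ∈ m.primeFactors, 1/(p:ℝ)) ≤ (Nat.totient m : ℝ) := by
          rw [e1]
          exact mul_le_mul_of_nonneg_left e2 hmR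
        nlinarith [mul_le_mul_of_nonneg_left e3 hmR, mul_le_mul_of_nonneg_left hWle hmR]
      calc (u iv * ∏ q ∈ S0 iv, (1 - 1/(q:ℝ))) * ((n:ℝ) + ((a j : ℕ):ℝ)) * (1/2)
          = (Nat.totient s : ℝ) * ((m:ℝ) * (1/2)) := by
            rw [hφs, hcastR]
            ring
        _ ≤ (Nat.totient s : ℝ) * (Nat.totient m : ℝ) :=
            mul_le_mul_of_nonneg_left hml hφsnn
        _ = (Nat.totient (n + a j) : ℝ) := htotR.symm
  -- now the comparison chain
  obtain ⟨m1, heq1, hm1⟩ := hmain n hn0 hmod ⟨i, Nat.lt_of_succ_lt h⟩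
  obtain ⟨m2, heq2, hm2⟩ := hmain n hn0 hmod ⟨i+1, h⟩
  obtain ⟨up1, low1'⟩ := main_est i (Nat.lt_of_succ_lt h) m1 heq1 hm1
  obtain ⟨up2, low2'⟩ := main_est (i+1) h m2 heq2 hm2
  have low1 := low1' (hW ⟨i, Nat.lt_of_succ_lt h⟩)
  obtain ⟨hw1a, hw1b⟩ := hwin i (Nat.lt_of_succ_lt h)
  obtain ⟨hw2a, hw2b⟩ := hwin (i+1) h
  have ha2k : ((a ⟨i+1, h⟩ : ℕ):ℝ) ≤ (k:ℝ) := by exact_mod_cast hak ⟨i+1, h⟩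
  have ha1p : (0:ℝ) < ((a ⟨i, Nat.lt_of_succ_lt h⟩ : ℕ):ℝ) := by
    exact_mod_cast ha1 ⟨i, Nat.lt_of_succ_lt h⟩
  have ha2p : (0:ℝ) < ((a ⟨i+1, h⟩ : ℕ):ℝ) := by exact_mod_cast ha1 ⟨i+1, h⟩
  have hn0R : (0:ℝ) < (n:ℝ) := by exact_mod_cast hn0
  have hA2pos : (0:ℝ) < (n:ℝ) + ((a ⟨i+1, h⟩ : ℕ):ℝ) := by linarith
  have hcc : 2 * c (i+1) * (2*(n:ℝ)) = (c i) * (n:ℝ) / 2 := by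
    simp only [hc, pow_succ]
    field_simp
    ring
  have hchain : (Nat.totient (n + a ⟨i+1, h⟩) : ℝ)
      < (Nat.totient (n + a ⟨i, Nat.lt_of_succ_lt h⟩) : ℝ) := by
    have c2 : (u (i+1) * ∏ q ∈ S0 (i+1), (1 - 1/(q:ℝ))) * ((n:ℝ) + ((a ⟨i+1, h⟩ : ℕ):ℝ))
        < 2 * c (i+1) * ((n:ℝ) + ((a ⟨i+1, h⟩ : ℕ):ℝ)) :=
      mul_lt_mul_of_pos_right hw2b hA2pos
    have c3 : 2 * c (i+1) * ((n:ℝ) + ((a ⟨i+1, h⟩ : ℕ):ℝ)) ≤ 2 * c (i+1) * (2*(n:ℝ)) := by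
      apply mul_le_mul_of_nonneg_left _ (by linarith [hcpos (i+1)])
      linarith
    have c4 : (c i) * (n:ℝ) / 2 ≤ (u i * ∏ q ∈ S0 i, (1 - 1/(q:ℝ))) * (n:ℝ) / 2 := by
      have := mul_le_mul_of_nonneg_right hw1a hn0R.le
      linarith
    have c5 : (u i * ∏ q ∈ S0 i, (1 - 1/(q:ℝ))) * (n:ℝ) / 2
        ≤ (u i * ∏ q ∈ S0 i, (1 - 1/(q:ℝ)))
            * ((n:ℝ) + ((a ⟨i, Nat.lt_of_succ_lt h⟩ : ℕ):ℝ)) * (1/2) := by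
      have hP1 : (0:ℝ) ≤ u i * ∏ q ∈ S0 i, (1 - 1/(q:ℝ)) := le_trans (hcpos i).le hw1a
      have h5 : (n:ℝ) ≤ (n:ℝ) + ((a ⟨i, Nat.lt_of_succ_lt h⟩ : ℕ):ℝ) := by linarith
      have h6 := mul_le_mul_of_nonneg_left h5 hP1
      linarith
    linarith [low1, up2, c2, c3, c4, c5, hcc]
  exact_mod_cast hchain

lemma card_filter_mono' {s : Finset ℕ} {p q : ℕ → Prop} {hp : DecidablePred p}
    {hq : DecidablePred q} (h : ∀ n ∈ s, p n → q n) :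
    (@Finset.filter _ p hp s).card ≤ (@Finset.filter _ q hq s).card := by
  apply Finset.card_le_card
  intro n hn
  simp only [Finset.mem_filter] at hn ⊢
  exact ⟨hn.1, h n hn.1 hn.2⟩

lemma card_filter_le' {s : Finset ℕ} {p : ℕ → Prop} {hp : DecidablePred p} :
    (@Finset.filter _ p hp s).card ≤ s.card := by
  apply Finset.card_le_card
  intro n hn
  simp only [Finset.mem_filter] at hn
  exact hn.1

lemma density_ratio_le_one (F : Finset ℕ) (x : ℕ) (hcard : F.card ≤ x) :
    ((F.card : ℝ)) / x ≤ 1 := by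
  rcases Nat.eq_zero_or_pos x with h0 | h0
  · subst h0
    have : F.card = 0 := by omega
    simp [this]
  · have hxR : (0:ℝ) < x := by exact_mod_cast h0
    rw [div_le_one hxR]
    exact_mod_cast hcard

open scoped Classical in
/-- The lower density of a set of positive integers:
`liminf_{x→∞} #{n ∈ S : n ≤ x} / x`. -/
noncomputable def lowerDensity (S : Set ℕ) : ℝ :=
  Filter.atTop.liminf fun x : ℕ =>
    (((Finset.Icc 1 x).filter (fun n => n ∈ S)).card : ℝ) / x

theorem totient_consecutive_prescribed_order
    (k : ℕ) (hk : 2 ≤ k) (e : Equiv.Perm (Fin k)) :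
    0 < lowerDensity {n : ℕ | 0 < n ∧
      ∀ i : ℕ, ∀ h : i + 1 < k,
        Nat.totient (n + (e ⟨i, Nat.lt_of_succ_lt h⟩ : Fin k).val + 1) >
          Nat.totient (n + (e ⟨i + 1, h⟩ : Fin k).val + 1)} := by
  classical
  obtain ⟨M, y, r, hM, hy16, hMy, hord⟩ := key_lemma k hk (fun j => (e j : ℕ) + 1)
    (fun j => Nat.succ_le_succ (Nat.zero_le _))
    (fun j => (e j).isLt)
    (fun j1 j2 hj => e.injective (Fin.ext (Nat.succ_injective hj)))
  have hcount := count_good k M y k (r % M) (fun j => (e j : ℕ) + 1) (by omega) hM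
    (Nat.mod_lt _ hM) hy16 (fun j => Nat.succ_le_succ (Nat.zero_le _))
    (fun j => (e j).isLt) hMy
  have hM0 : (0:ℝ) < M := by exact_mod_cast hM
  have hpos : (0:ℝ) < 1/(2*(M:ℝ)) := by positivity
  refine lt_of_lt_of_le hpos ?_
  unfold lowerDensity
  refine Filter.le_liminf_of_le ?_ ?_
  · -- coboundedness: the sequence is bounded above by 1
    apply Filter.IsBoundedUnder.isCoboundedUnder_ge
    apply Filter.isBoundedUnder_of
    refine ⟨1, fun x => density_ratio_le_one _ x (le_trans card_filter_le' ?_)⟩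
    rw [Nat.card_Icc]
    omega
  · -- eventual lower bound
    filter_upwards [hcount, Filter.eventually_gt_atTop 0] with x hx hx0
    have hxR : (0:ℝ) < x := by exact_mod_cast hx0
    rw [le_div_iff₀ hxR]
    have heq : 1/(2*(M:ℝ)) * x = (x:ℝ)/(2*M) := by ring
    rw [heq]
    refine le_trans hx (Nat.cast_le.mpr (card_filter_mono' ?_))
    intro n _hmem hn
    obtain ⟨hmod, hkn, hW⟩ := hn
    refine ⟨?_, ?_⟩
    · omega
    · intro i h
      have hlt := hord n hkn hmod hW i h
      have e1 : n + ((e ⟨i, Nat.lt_of_succ_lt h⟩ : Fin k).val + 1)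
          = n + (e ⟨i, Nat.lt_of_succ_lt h⟩ : Fin k).val + 1 := by omega
      have e2 : n + ((e ⟨i+1, h⟩ : Fin k).val + 1)
          = n + (e ⟨i+1, h⟩ : Fin k).val + 1 := by omega
      rw [e1, e2] at hlt
      exact hlt
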